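/- For every graph G with n vertices that is K_{r+1}-free, the number of edges of G is at most (1 − 1/r)·n²/2. -/

import Mathlib

open SimpleGraph Finset

def IsAbDom {V : Type*} [Fintype V] [DecidableEq V] (G : SimpleGraph V)
    [DecidableRel G.Adj] (a b : ℕ) (S : Finset V) : Prop :=
  (∀ v ∈ S, a ≤ (G.neighborFinset v ∩ S).card) ∧
  (∀ v ∉ S, b ≤ (G.neighborFinset v ∩ S).card)

theorem stmt11 {V : Type*} [Fintype V] [DecidableEq V] (G : SimpleGraph V) [DecidableRel G.Adj] (r : ℕ) (hr : 0 < r) (hfree : G.CliqueFree (r + 1)) :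
    (G.edgeFinset.card : ℝ) ≤ (1 - 1 / r) * (Fintype.card V : ℝ) ^ 2 / 2 := by
  set n := Fintype.card V with hn
  rcases Nat.eq_zero_or_pos n with h0 | hpos
  · have : IsEmpty V := Fintype.card_eq_zero_iff.mp h0
    have : G.edgeFinset.card = 0 := by
      simp [Finset.card_eq_zero, Finset.eq_empty_iff_forall_notMem]
    rw [this, h0]
    simp
  -- take a Turán-maximal graph
  obtain ⟨H, hdec, hH⟩ := SimpleGraph.exists_isTuranMaximal (V := V) hr
  have hle : (G.edgeFinset.card : ℝ) ≤ (H.edgeFinset.card : ℝ) := by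
    exact_mod_cast hH.2 hfree
  refine hle.trans ?_
  -- analyze H via its finpartition
  set P := hH.finpartition with hP
  have hdeg : ∀ v : V, H.degree v = n - (P.part v).card := fun v ↦
    hH.degree_eq_card_sub_part_card
  have hpartle : ∀ v : V, (P.part v).card ≤ n := fun v ↦ by
    simpa [hn] using Finset.card_le_card (P.le (P.part_mem.2 (Finset.mem_univ v)))
  -- sum of degrees
  have hsum : 2 * H.edgeFinset.card = ∑ v : V, H.degree v :=
    (H.sum_degrees_eq_twice_card_edges).symm
  -- express in ℝ
  have key : (2 : ℝ) * H.edgeFinset.card =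
      (n : ℝ) ^ 2 - ∑ p ∈ P.parts, (p.card : ℝ) ^ 2 := by
    have h1 : (2 : ℝ) * H.edgeFinset.card = ∑ v : V, ((n : ℝ) - (P.part v).card) := by
      rw [show (2 : ℝ) * H.edgeFinset.card = ((2 * H.edgeFinset.card : ℕ) : ℝ) by push_cast; ring,
        hsum]
      push_cast
      refine Finset.sum_congr rfl fun v _ ↦ ?_
      rw [hdeg v]
      rw [Nat.cast_sub (hpartle v)]
    rw [h1, Finset.sum_sub_distrib]
    have h2 : ∑ v : V, ((P.part v).card : ℝ) = ∑ p ∈ P.parts, (p.card : ℝ) ^ 2 := by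
      have hbi := Finset.sum_biUnion (s := P.parts) (t := id)
        (f := fun v ↦ ((P.part v).card : ℝ)) P.supIndep.pairwiseDisjoint
      rw [P.biUnion_parts] at hbi
      rw [hbi]
      refine Finset.sum_congr rfl fun p hp ↦ ?_
      have : ∀ v ∈ id p, ((fun v ↦ ((P.part v).card : ℝ)) v) = (p.card : ℝ) := fun v hv ↦ by
        simp only [id] at hv
        simp only
        rw [P.part_eq_of_mem hp hv]
      rw [Finset.sum_congr rfl this]
      simp [sq]
    rw [h2, Finset.sum_const, Finset.card_univ, ← hn, nsmul_eq_mul, sq]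
  -- Cauchy-Schwarz on the parts
  have hk : (P.parts.card : ℝ) ≤ r := by exact_mod_cast hH.card_parts_le
  have hkpos : 0 < P.parts.card := by
    rcases Finset.eq_empty_or_nonempty P.parts with he | hne
    · exfalso
      have := P.biUnion_parts
      rw [he] at this
      simp at this
      have : (Finset.univ : Finset V).card = 0 := by rw [← this]; simp
      simp [hn] at this
      omega
    · exact Finset.card_pos.mpr hne
  have hcs : (n : ℝ) ^ 2 ≤ (P.parts.card : ℝ) * ∑ p ∈ P.parts, (p.card : ℝ) ^ 2 := by
    have := sq_sum_le_card_mul_sum_sq (s := P.parts) (f := fun p ↦ (p.card : ℝ))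
    have hsump : ∑ p ∈ P.parts, (p.card : ℝ) = (n : ℝ) := by
      rw [← Nat.cast_sum]
      exact_mod_cast congrArg Nat.cast P.sum_card_parts
    rwa [hsump] at this
  -- so ∑ |p|² ≥ n²/r
  have hsq : (n : ℝ) ^ 2 / r ≤ ∑ p ∈ P.parts, (p.card : ℝ) ^ 2 := by
    have hkR : (0 : ℝ) < P.parts.card := by exact_mod_cast hkpos
    have hrR : (0 : ℝ) < r := by exact_mod_cast hr
    have h1 : (n : ℝ) ^ 2 / P.parts.card ≤ ∑ p ∈ P.parts, (p.card : ℝ) ^ 2 := by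
      rw [div_le_iff₀ hkR]
      linarith [hcs]
    refine le_trans ?_ h1
    apply div_le_div_of_nonneg_left (by positivity) hkR hk
  have hrR : (0 : ℝ) < r := by exact_mod_cast hr
  have : (2 : ℝ) * H.edgeFinset.card ≤ (n : ℝ) ^ 2 - (n : ℝ) ^ 2 / r := by
    rw [key]; linarith
  have heq : (1 - 1 / (r : ℝ)) * (n : ℝ) ^ 2 / 2 = ((n : ℝ) ^ 2 - (n : ℝ) ^ 2 / r) / 2 := by
    field_simp
  rw [heq]
  linarith
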